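/- Let A be a unital C*-algebra, μ a state on A, and define L₀(a) = μ((a − μ(a))*(a − μ(a)))^{1/2}. Then L₀ is a Leibniz seminorm: L₀(ab) ≤ ‖a‖·L₀(b) + L₀(a)·‖b‖ for all a, b ∈ A, and L₀(1) = 0. -/

import Mathlib

open scoped ComplexOrder

section LzeroAux

variable {A : Type*} [NormedRing A] [StarRing A] [CStarRing A]
    [NormedAlgebra ℂ A] [StarModule ℂ A] [CompleteSpace A]

omit [CStarRing A] [StarModule ℂ A] [CompleteSpace A] in
theorem LzeroAux.mu_im (μ : A →ₗ[ℂ] ℂ) (hpos : ∀ a : A, 0 ≤ μ (star a * a)) (x : A) :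
    (starRingEnd ℂ) (μ (star x * x)) = μ (star x * x) := by
  have h := hpos x
  rw [Complex.le_def] at h
  exact Complex.conj_eq_iff_im.mpr h.2.symm

omit [CStarRing A] [CompleteSpace A] in
theorem LzeroAux.mu_conj (μ : A →ₗ[ℂ] ℂ) (hpos : ∀ a : A, 0 ≤ μ (star a * a)) (x y : A) :
    (starRingEnd ℂ) (μ (star y * x)) = μ (star x * y) := by
  have h1 := LzeroAux.mu_im μ hpos (x + y)
  have h2 := LzeroAux.mu_im μ hpos (x + Complex.I • y)
  have hp := LzeroAux.mu_im μ hpos x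
  have hq := LzeroAux.mu_im μ hpos y
  have hI : Complex.I ^ 2 = -1 := Complex.I_sq
  simp only [star_add, add_mul, mul_add, map_add, star_smul, RCLike.star_def,
    smul_mul_assoc, mul_smul_comm, map_smul, smul_eq_mul, Complex.conj_I, map_mul,
    map_neg, neg_mul] at h1 h2
  set u := μ (star x * y)
  set v := μ (star y * x)
  linear_combination (1/2)*h1 - (Complex.I/2)*h2 + ((Complex.I-1)/2)*hp
    - ((Complex.I^3+1)/2)*hq
    + (((starRingEnd ℂ) v + v - u - (starRingEnd ℂ) u)/2) * hI

/-- The positive sesquilinear form associated to a positive functional, as a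
`PreInnerProductSpace.Core`. -/
noncomputable def LzeroAux.muCore (μ : A →ₗ[ℂ] ℂ) (hpos : ∀ a : A, 0 ≤ μ (star a * a)) :
    PreInnerProductSpace.Core ℂ A where
  inner x y := μ (star x * y)
  conj_inner_symm x y := LzeroAux.mu_conj μ hpos x y
  re_inner_nonneg x := by
    have h := (Complex.le_def.mp (hpos x)).1
    simpa using h
  add_left x y z := by simp [star_add, add_mul]
  smul_left x y r := by simp [star_smul, smul_mul_assoc, RCLike.star_def]

omit [CStarRing A] [CompleteSpace A] in
/-- Cauchy–Schwarz for a positive functional. -/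
theorem LzeroAux.mu_cs (μ : A →ₗ[ℂ] ℂ) (hpos : ∀ a : A, 0 ≤ μ (star a * a)) (x y : A) :
    ‖μ (star x * y)‖ ≤ Real.sqrt (μ (star x * x)).re * Real.sqrt (μ (star y * y)).re := by
  letI c := LzeroAux.muCore μ hpos
  letI : Inner ℂ A := InnerProductSpace.Core.toPreInner'
  have h := InnerProductSpace.Core.inner_mul_inner_self_le (𝕜 := ℂ) (F := A) x y
  have hxy : @inner ℂ A _ x y = μ (star x * y) := rfl
  have hyx : @inner ℂ A _ y x = μ (star y * x) := rfl
  have hxx : @inner ℂ A _ x x = μ (star x * x) := rfl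
  have hyy : @inner ℂ A _ y y = μ (star y * y) := rfl
  rw [hxy, hyx, hxx, hyy] at h
  have hnyx : ‖μ (star y * x)‖ = ‖μ (star x * y)‖ := by
    rw [← LzeroAux.mu_conj μ hpos x y, RCLike.norm_conj]
  rw [hnyx] at h
  have h1 : 0 ≤ (μ (star x * x)).re := by simpa using (Complex.le_def.mp (hpos x)).1
  calc ‖μ (star x * y)‖ = Real.sqrt (‖μ (star x * y)‖ * ‖μ (star x * y)‖) := by
        rw [Real.sqrt_mul_self (norm_nonneg _)]
    _ ≤ Real.sqrt ((μ (star x * x)).re * (μ (star y * y)).re) := Real.sqrt_le_sqrt h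
    _ = _ := Real.sqrt_mul h1 _

omit [CStarRing A] [CompleteSpace A] in
/-- Triangle inequality for the seminorm `x ↦ √(μ (x*x)).re`. -/
theorem LzeroAux.muN_add (μ : A →ₗ[ℂ] ℂ) (hpos : ∀ a : A, 0 ≤ μ (star a * a)) (x y : A) :
    Real.sqrt (μ (star (x + y) * (x + y))).re ≤
      Real.sqrt (μ (star x * x)).re + Real.sqrt (μ (star y * y)).re := by
  set Nx := Real.sqrt (μ (star x * x)).re with hNx
  set Ny := Real.sqrt (μ (star y * y)).re with hNy
  have hxx : (μ (star x * x)).re = Nx ^ 2 :=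
    (Real.sq_sqrt (by simpa using (Complex.le_def.mp (hpos x)).1)).symm
  have hyy : (μ (star y * y)).re = Ny ^ 2 :=
    (Real.sq_sqrt (by simpa using (Complex.le_def.mp (hpos y)).1)).symm
  have hexp : μ (star (x + y) * (x + y))
      = μ (star x * x) + μ (star x * y) + μ (star y * x) + μ (star y * y) := by
    simp only [star_add, add_mul, mul_add, map_add]; ring
  have hre : (μ (star (x + y) * (x + y))).re = Nx ^ 2 + Ny ^ 2 + 2 * (μ (star x * y)).re := by
    rw [hexp]
    have hsym : (μ (star y * x)).re = (μ (star x * y)).re := by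
      rw [← LzeroAux.mu_conj μ hpos x y, Complex.conj_re]
    simp only [Complex.add_re, hsym, hxx, hyy]
    ring
  have hcs : (μ (star x * y)).re ≤ Nx * Ny := by
    have h := LzeroAux.mu_cs μ hpos x y
    have h2 : (μ (star x * y)).re ≤ ‖μ (star x * y)‖ := by
      exact Complex.re_le_norm _
    rw [← hNx, ← hNy] at h
    linarith
  have hb : (μ (star (x + y) * (x + y))).re ≤ (Nx + Ny) ^ 2 := by
    rw [hre]; nlinarith [hcs]
  calc Real.sqrt (μ (star (x + y) * (x + y))).re
      ≤ Real.sqrt ((Nx + Ny) ^ 2) := Real.sqrt_le_sqrt hb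
    _ = Nx + Ny := Real.sqrt_sq (add_nonneg (Real.sqrt_nonneg _) (Real.sqrt_nonneg _))

omit [CStarRing A] [CompleteSpace A] in
theorem LzeroAux.muN_smul (μ : A →ₗ[ℂ] ℂ) (z : ℂ) (x : A) :
    Real.sqrt (μ (star (z • x) * (z • x))).re = ‖z‖ * Real.sqrt (μ (star x * x)).re := by
  have hz : μ (star (z • x) * (z • x)) = ((‖z‖ ^ 2 : ℝ) : ℂ) * μ (star x * x) := by
    simp only [star_smul, RCLike.star_def, smul_mul_assoc, mul_smul_comm, map_smul,
      smul_eq_mul, ← mul_assoc]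
    rw [mul_comm z, Complex.conj_mul']
    norm_cast
  rw [hz, show (((‖z‖ ^ 2 : ℝ) : ℂ) * μ (star x * x)).re = ‖z‖ ^ 2 * (μ (star x * x)).re by
    rw [Complex.re_ofReal_mul]]
  rw [Real.sqrt_mul (by positivity), Real.sqrt_sq (norm_nonneg z)]

/-- In a unital C⋆-algebra, `‖a‖² - a*a` is of the form `r*r`. -/
theorem LzeroAux.sqrt_decomp {A : Type*} [CStarAlgebra A] (a : A) :
    ∃ r : A, star r * r = (‖a‖ ^ 2 : ℝ) • (1 : A) - star a * a := by
  set p := star a * a with hp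
  have hpsa : IsSelfAdjoint p := IsSelfAdjoint.star_mul_self a
  set f : ℝ → ℝ := fun x => Real.sqrt (‖p‖ - x) with hf
  rcases subsingleton_or_nontrivial A with hsub | hnt
  · exact ⟨0, Subsingleton.elim _ _⟩
  refine ⟨cfc f p, ?_⟩
  have hsa : IsSelfAdjoint (cfc f p) := cfc_predicate f p
  rw [hsa.star_eq]
  have hcont : ContinuousOn f (spectrum ℝ p) :=
    (Real.continuous_sqrt.comp (continuous_const.sub continuous_id)).continuousOn
  rw [← cfc_mul f f p hcont hcont]
  have hcongr : cfc (fun x => f x * f x) p = cfc (fun x : ℝ => ‖p‖ - x) p := by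
    apply cfc_congr
    intro x hx
    have hxle : x ≤ ‖p‖ := by
      have := spectrum.norm_le_norm_of_mem hx
      calc x ≤ |x| := le_abs_self x
        _ = ‖x‖ := rfl
        _ ≤ ‖p‖ := this
    simp only [hf]
    exact Real.mul_self_sqrt (by linarith)
  rw [hcongr]
  have hsub' : cfc (fun x : ℝ => ‖p‖ - x) p = algebraMap ℝ A ‖p‖ - p := by
    have h1 := cfc_sub (fun _ => (‖p‖ : ℝ)) (fun x => x) p
    rw [cfc_const _ _, cfc_id' ℝ p] at h1
    exact h1
  rw [hsub', Algebra.algebraMap_eq_smul_one]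
  congr 1
  rw [hp, CStarRing.norm_star_mul_self, ← pow_two]

theorem LzeroAux.muN_opmul (μ : A →ₗ[ℂ] ℂ) (hpos : ∀ a : A, 0 ≤ μ (star a * a)) (a c : A) :
    Real.sqrt (μ (star (a * c) * (a * c))).re ≤ ‖a‖ * Real.sqrt (μ (star c * c)).re := by
  letI : CStarAlgebra A := {}
  obtain ⟨r, hr⟩ := LzeroAux.sqrt_decomp a
  have key : star (r * c) * (r * c)
      = (((‖a‖ ^ 2 : ℝ) : ℂ)) • (star c * c) - star (a * c) * (a * c) := by
    calc star (r * c) * (r * c) = star c * (star r * r) * c := by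
          simp [star_mul, mul_assoc]
      _ = _ := by
          rw [hr, ← Complex.coe_smul]
          simp [mul_sub, sub_mul, smul_mul_assoc, mul_smul_comm, star_mul, mul_assoc]
  have h0 := hpos (r * c)
  rw [key, map_sub, map_smul] at h0
  have hre : 0 ≤ ‖a‖ ^ 2 * (μ (star c * c)).re - (μ (star (a * c) * (a * c))).re := by
    have h1 := (Complex.le_def.mp h0).1
    simp only [Complex.sub_re, Complex.zero_re, smul_eq_mul, Complex.mul_re,
      ← Complex.ofReal_pow, Complex.ofReal_re, Complex.ofReal_im, zero_mul, sub_zero] at h1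
    linarith
  have hle : (μ (star (a * c) * (a * c))).re ≤ ‖a‖ ^ 2 * (μ (star c * c)).re := by linarith
  calc Real.sqrt (μ (star (a * c) * (a * c))).re
      ≤ Real.sqrt (‖a‖ ^ 2 * (μ (star c * c)).re) := Real.sqrt_le_sqrt hle
    _ = ‖a‖ * Real.sqrt (μ (star c * c)).re := by
        rw [Real.sqrt_mul (by positivity), Real.sqrt_sq (norm_nonneg a)]

end LzeroAux

/-- The seminorm L₀(a) = ‖a − μ(a)1‖_μ = (μ((a − μ(a))*(a − μ(a))))^{1/2} associated to a
state μ on a unital C*-algebra. -/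
noncomputable def Lzero {A : Type*} [NormedRing A] [StarRing A] [CStarRing A]
    [NormedAlgebra ℂ A] [StarModule ℂ A] (μ : A →ₗ[ℂ] ℂ) (a : A) : ℝ :=
  Real.sqrt (μ (star (a - μ a • 1) * (a - μ a • 1))).re

/-- For a state μ on a unital C*-algebra, L₀(a) = ‖a − μ(a)1‖_μ is a Leibniz seminorm:
L₀(1) = 0 and L₀(ab) ≤ ‖a‖L₀(b) + L₀(a)‖b‖. -/
theorem Lzero_leibniz {A : Type*} [NormedRing A] [StarRing A] [CStarRing A]
    [NormedAlgebra ℂ A] [StarModule ℂ A] [CompleteSpace A]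
    (μ : A →ₗ[ℂ] ℂ) (hpos : ∀ a : A, 0 ≤ μ (star a * a)) (hone : μ 1 = 1) :
    Lzero μ (1 : A) = 0 ∧
      ∀ a b : A, Lzero μ (a * b) ≤ ‖a‖ * Lzero μ b + Lzero μ a * ‖b‖ := by
  have hre_nonneg : ∀ x : A, 0 ≤ (μ (star x * x)).re := fun x => by
    simpa using (Complex.le_def.mp (hpos x)).1
  constructor
  · have h1 : (1 : A) - μ 1 • 1 = 0 := by rw [hone]; simp
    rw [Lzero, h1]
    simp
  intro a b
  -- centered elements
  set da := a - μ a • 1 with hda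
  set db := b - μ b • 1 with hdb
  -- μ vanishes on centered elements
  have hmu_center : ∀ c : A, μ (c - μ c • 1) = 0 := fun c => by
    simp [map_sub, map_smul, hone]
  -- minimality: Lzero μ c ≤ ‖c - λ•1‖_μ for any λ
  have hmin : ∀ (c : A) (lam : ℂ),
      Lzero μ c ≤ Real.sqrt (μ (star (c - lam • 1) * (c - lam • 1))).re := by
    intro c lam
    set d := c - μ c • 1 with hd
    set w := μ c - lam with hw
    have hsplit : c - lam • 1 = d + w • 1 := by
      rw [hd, hw, sub_smul]; abel
    have hmd : μ d = 0 := hmu_center c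
    have hstar_d : μ (star d) = 0 := by
      have h := LzeroAux.mu_conj μ hpos d 1
      simp only [star_one, one_mul, mul_one, hmd, map_zero] at h
      exact h.symm
    have hexp : μ (star (c - lam • 1) * (c - lam • 1))
        = μ (star d * d) + μ (star ((w : ℂ) • (1 : A)) * ((w : ℂ) • (1 : A))) := by
      rw [hsplit]
      have e1 : μ (star d * (w • (1 : A))) = 0 := by
        simp only [mul_smul_comm, mul_one, map_smul, smul_eq_mul]
        rw [hstar_d, mul_zero]
      have e2 : μ (star ((w : ℂ) • (1 : A)) * d) = 0 := by
        simp only [star_smul, RCLike.star_def, star_one, smul_mul_assoc, one_mul,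
          map_smul, smul_eq_mul]
        rw [hmd, mul_zero]
      simp only [star_add, add_mul, mul_add, map_add, e1, e2, add_zero, zero_add]
    have hre : (μ (star (c - lam • 1) * (c - lam • 1))).re
        = (μ (star d * d)).re + (μ (star ((w : ℂ) • (1 : A)) * ((w : ℂ) • (1 : A)))).re := by
      rw [hexp, Complex.add_re]
    have hle : (μ (star d * d)).re ≤ (μ (star (c - lam • 1) * (c - lam • 1))).re := by
      rw [hre]
      have := hre_nonneg ((w : ℂ) • (1 : A))
      linarith
    exact Real.sqrt_le_sqrt hle
  -- |μ b| ≤ ‖b‖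
  have hmuN_one : Real.sqrt (μ (star (1 : A) * 1)).re = 1 := by
    rw [star_one, one_mul, hone]
    simp
  have hstate : ∀ c : A, ‖μ c‖ ≤ ‖c‖ := by
    intro c
    have h2 := LzeroAux.mu_cs μ hpos 1 c
    have h3 := LzeroAux.muN_opmul μ hpos c 1
    simp only [mul_one, star_one, hone, Complex.one_re, Real.sqrt_one] at h3
    rw [hmuN_one, one_mul] at h2
    calc ‖μ c‖ = ‖μ (star (1 : A) * c)‖ := by rw [star_one, one_mul]
      _ ≤ Real.sqrt (μ (star c * c)).re := h2
      _ ≤ ‖c‖ := h3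
  -- split a*b - μ(a)μ(b) • 1
  have hsplit : a * b - (μ a * μ b) • 1 = a * db + μ b • da := by
    rw [hdb, hda]
    simp only [mul_sub, smul_sub, mul_smul_comm, mul_one, smul_smul]
    rw [mul_comm (μ b) (μ a)]
    abel
  calc Lzero μ (a * b)
      ≤ Real.sqrt (μ (star (a * b - (μ a * μ b) • 1) * (a * b - (μ a * μ b) • 1))).re :=
        hmin (a * b) (μ a * μ b)
    _ = Real.sqrt (μ (star (a * db + μ b • da) * (a * db + μ b • da))).re := by rw [hsplit]
    _ ≤ Real.sqrt (μ (star (a * db) * (a * db))).re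
        + Real.sqrt (μ (star (μ b • da) * (μ b • da))).re := LzeroAux.muN_add μ hpos _ _
    _ ≤ ‖a‖ * Real.sqrt (μ (star db * db)).re
        + ‖μ b‖ * Real.sqrt (μ (star da * da)).re := by
        gcongr
        · exact LzeroAux.muN_opmul μ hpos a db
        · exact (LzeroAux.muN_smul μ (μ b) da).le
    _ ≤ ‖a‖ * Lzero μ b + Lzero μ a * ‖b‖ := by
        have h1 : Real.sqrt (μ (star db * db)).re = Lzero μ b := rfl
        have h2 : Real.sqrt (μ (star da * da)).re = Lzero μ a := rfl
        rw [h1, h2]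
        have h3 : ‖μ b‖ * Lzero μ a ≤ Lzero μ a * ‖b‖ := by
          rw [mul_comm]
          exact mul_le_mul_of_nonneg_left (hstate b) (Real.sqrt_nonneg _)
        linarith
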